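/- Vizing's Adjacency Lemma: Let G be a class 2 graph with maximum degree Δ and let e = xy be a critical edge of G (i.e., χ'(G−e) < χ'(G)). Then x is adjacent to at least Δ − d(y) + 1 vertices of degree Δ distinct from y. -/

import Mathlib

/-- A proper `k`-edge-coloring: colors are in `[k] = {0, …, k-1}` and edges sharing a
vertex receive distinct colors. -/
def IsProperEdgeColoring {V : Type*} (G : SimpleGraph V) (φ : Sym2 V → ℕ) (k : ℕ) : Prop :=
  (∀ e ∈ G.edgeSet, φ e < k) ∧
  ∀ e ∈ G.edgeSet, ∀ f ∈ G.edgeSet, e ≠ f → (∃ v, v ∈ e ∧ v ∈ f) → φ e ≠ φ f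

/-- The chromatic index `χ'(G)`: least `k` admitting a proper `k`-edge-coloring. -/
noncomputable def chromaticIndex {V : Type*} (G : SimpleGraph V) : ℕ :=
  sInf {k | ∃ φ, IsProperEdgeColoring G φ k}

/-- `G` is `Δ`-critical: `χ'(G) = Δ(G) + 1` and every edge of `G` is critical. -/
def IsDeltaCritical {V : Type*} [Fintype V] [DecidableEq V] (G : SimpleGraph V)
    [DecidableRel G.Adj] : Prop :=
  chromaticIndex G = G.maxDegree + 1 ∧
  ∀ e ∈ G.edgeSet, chromaticIndex (G.deleteEdges {e}) < chromaticIndex G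

/-- The degree of `v` in the core `G_Δ` (the subgraph induced by the maximum-degree
vertices): the number of maximum-degree neighbors of `v`. -/
def coreDegree {V : Type*} [Fintype V] [DecidableEq V] (G : SimpleGraph V)
    [DecidableRel G.Adj] (v : V) : ℕ :=
  ((G.neighborFinset v).filter fun u => G.degree u = G.maxDegree).card


open SimpleGraph Finset

namespace VAL
set_option linter.unusedSectionVars false

variable {V : Type*} [Fintype V] [DecidableEq V]

/-- convenient re-statement of properness -/
def PC (Γ : SimpleGraph V) (φ : Sym2 V → ℕ) (k : ℕ) : Prop :=
  (∀ ⦃a b⦄, Γ.Adj a b → φ s(a,b) < k) ∧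
  ∀ ⦃a b c⦄, Γ.Adj a b → Γ.Adj a c → b ≠ c → φ s(a,b) ≠ φ s(a,c)

lemma sym2_eq_iff {a b c d : V} : s(a,b) = s(c,d) ↔ (a = c ∧ b = d) ∨ (a = d ∧ b = c) :=
  Sym2.eq_iff

lemma pc_iff (Γ : SimpleGraph V) (φ : Sym2 V → ℕ) (k : ℕ) :
    PC Γ φ k ↔ IsProperEdgeColoring Γ φ k := by
  constructor
  · rintro ⟨h1, h2⟩
    constructor
    · intro e he
      induction e with
      | h a b => exact h1 ((Γ.mem_edgeSet).1 he)
    · intro e he f hf hne hshare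
      obtain ⟨v, hv1, hv2⟩ := hshare
      obtain ⟨b, rfl⟩ := Sym2.mem_iff_exists.1 hv1
      obtain ⟨c, rfl⟩ := Sym2.mem_iff_exists.1 hv2
      rw [Γ.mem_edgeSet] at he hf
      exact h2 he hf (by rintro rfl; exact hne rfl)
  · rintro ⟨h1, h2⟩
    constructor
    · intro a b hab
      exact h1 _ ((Γ.mem_edgeSet).2 hab)
    · intro a b c hab hac hbc
      refine h2 _ ((Γ.mem_edgeSet).2 hab) _ ((Γ.mem_edgeSet).2 hac) ?_
        ⟨a, Sym2.mem_mk_left a b, Sym2.mem_mk_left a c⟩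
      intro h
      rw [sym2_eq_iff] at h
      rcases h with ⟨_, h⟩ | ⟨h, h'⟩
      · exact hbc h
      · exact hbc (h'.trans h)

lemma pc_mono {Γ : SimpleGraph V} {φ k k'} (h : PC Γ φ k) (hk : k ≤ k') : PC Γ φ k' :=
  ⟨fun _ _ hab => lt_of_lt_of_le (h.1 hab) hk, h.2⟩

lemma exists_pc (Γ : SimpleGraph V) : ∃ k φ, PC Γ φ k := by
  classical
  refine ⟨Fintype.card (Sym2 V), fun e => (Fintype.equivFin (Sym2 V) e : ℕ), ?_, ?_⟩
  · intro a b _; exact (Fintype.equivFin (Sym2 V) _).2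
  · intro a b c _ _ hbc h
    have : s(a,b) = s(a,c) := (Fintype.equivFin (Sym2 V)).injective (Fin.ext h)
    rw [sym2_eq_iff] at this
    rcases this with ⟨_, h⟩ | ⟨h, h'⟩
    · exact hbc h
    · exact hbc (h'.trans h)

lemma chromaticIndex_le_of_pc {Γ : SimpleGraph V} {φ k} (h : PC Γ φ k) :
    chromaticIndex Γ ≤ k :=
  Nat.sInf_le ⟨φ, (pc_iff _ _ _).1 h⟩

lemma exists_pc_chromaticIndex (Γ : SimpleGraph V) :
    ∃ φ, PC Γ φ (chromaticIndex Γ) := by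
  obtain ⟨k, φ, h⟩ := exists_pc Γ
  have : {k | ∃ φ, IsProperEdgeColoring Γ φ k}.Nonempty := ⟨k, φ, (pc_iff _ _ _).1 h⟩
  obtain ⟨φ', h'⟩ := Nat.sInf_mem this
  exact ⟨φ', (pc_iff _ _ _).2 h'⟩


set_option linter.unusedSectionVars false

variable (G : SimpleGraph V) [DecidableRel G.Adj] (x : V)

def Del (r : V) : SimpleGraph V := G.deleteEdges {s(x, r)}

lemma del_adj {r a b : V} : (Del G x r).Adj a b ↔ G.Adj a b ∧ s(a,b) ≠ s(x,r) := by
  simp [Del, SimpleGraph.deleteEdges_adj]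

lemma del_le {r : V} : Del G x r ≤ G := by
  intro a b h; exact ((del_adj G x).1 h).1

def Miss (φ : Sym2 V → ℕ) (r v : V) (c : ℕ) : Prop :=
  c < G.maxDegree ∧ ∀ u, (Del G x r).Adj v u → φ s(v, u) ≠ c

def Good (φ : Sym2 V → ℕ) (r : V) : Prop :=
  G.Adj x r ∧ PC (Del G x r) φ G.maxDegree

lemma color_edge {φ : Sym2 V → ℕ} {r : V} {c : ℕ} (hg : Good G x φ r)
    (hx : Miss G x φ r x c) (hr : Miss G x φ r r c) : PC G (Function.update φ s(x,r) c) G.maxDegree := by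
  obtain ⟨hadj, h1, h2⟩ := hg
  set φ' := Function.update φ s(x,r) c with hφ'
  have hupd : ∀ e, e ≠ s(x,r) → φ' e = φ e := by
    intro e he; simp [hφ', Function.update_of_ne he]
  have hupd2 : φ' s(x,r) = c := by simp [hφ']
  constructor
  · intro a b hab
    by_cases h : s(a,b) = s(x,r)
    · rw [h, hupd2]; exact hx.1
    · rw [hupd _ h]; exact h1 ((del_adj G x).2 ⟨hab, h⟩)
  · intro a b d hab had hbd
    by_cases h : s(a,b) = s(x,r) <;> by_cases h' : s(a,d) = s(x,r)
    · exact absurd (h.trans h'.symm) (fun hh => hbd (by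
        rcases Sym2.eq_iff.1 hh with ⟨_, h⟩ | ⟨h1, h2⟩
        · exact h
        · exact h2.trans h1))
    · rw [h, hupd2, hupd _ h']
      -- edge s(a,d) is an edge of Del, a ∈ {x,r}
      have hdel : (Del G x r).Adj a d := (del_adj G x).2 ⟨had, h'⟩
      rcases Sym2.eq_iff.1 h with ⟨hax, _⟩ | ⟨har, _⟩
      · subst hax; exact (hx.2 d hdel).symm
      · subst har; exact (hr.2 d hdel).symm
    · rw [h', hupd2, hupd _ h]
      have hdel : (Del G x r).Adj a b := (del_adj G x).2 ⟨hab, h⟩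
      rcases Sym2.eq_iff.1 h' with ⟨hax, _⟩ | ⟨har, _⟩
      · subst hax; exact (hx.2 b hdel)
      · subst har; exact (hr.2 b hdel)
    · rw [hupd _ h, hupd _ h']
      exact h2 ((del_adj G x).2 ⟨hab, h⟩) ((del_adj G x).2 ⟨had, h'⟩) hbd

open Classical in
/-- missing set as a `Finset` -/
noncomputable def MS (φ : Sym2 V → ℕ) (r v : V) : Finset ℕ :=
  (Finset.range G.maxDegree).filter (fun c => ∀ u, (Del G x r).Adj v u → φ s(v, u) ≠ c)

lemma ms_mem {φ : Sym2 V → ℕ} {r v : V} {c : ℕ} : c ∈ MS G x φ r v ↔ Miss G x φ r v c := by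
  classical
  simp only [MS, Miss, Finset.mem_filter, Finset.mem_range]

open Classical in
/-- neighbours in the graph with `xr` deleted -/
noncomputable def NB (r v : V) : Finset V := Finset.univ.filter (fun u => (Del G x r).Adj v u)

lemma nb_mem {r v u : V} : u ∈ NB G x r v ↔ (Del G x r).Adj v u := by
  classical simp [NB]

lemma nb_card_le (r v : V) : (NB G x r v).card ≤ G.maxDegree := by
  classical
  have : NB G x r v ⊆ G.neighborFinset v := by
    intro u hu
    rw [SimpleGraph.mem_neighborFinset]
    exact del_le G x ((nb_mem G x).1 hu)
  exact le_trans (Finset.card_le_card this) (by rw [SimpleGraph.card_neighborFinset_eq_degree]; exact G.degree_le_maxDegree v)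

lemma ms_card {φ : Sym2 V → ℕ} {r : V} (hpc : PC (Del G x r) φ G.maxDegree) (v : V) :
    (MS G x φ r v).card + (NB G x r v).card = G.maxDegree := by
  classical
  have himg : (NB G x r v).image (fun u => φ s(v,u)) ⊆ Finset.range G.maxDegree := by
    intro c hc
    obtain ⟨u, hu, rfl⟩ := Finset.mem_image.1 hc
    exact Finset.mem_range.2 (hpc.1 ((nb_mem G x).1 hu))
  have hms : MS G x φ r v = Finset.range G.maxDegree \ (NB G x r v).image (fun u => φ s(v,u)) := by
    ext c
    simp only [MS, Finset.mem_filter, Finset.mem_sdiff, Finset.mem_image, Finset.mem_range]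
    constructor
    · rintro ⟨h1, h2⟩
      refine ⟨h1, ?_⟩
      rintro ⟨u, hu, rfl⟩
      exact h2 u ((nb_mem G x).1 hu) rfl
    · rintro ⟨h1, h2⟩
      refine ⟨h1, fun u hu he => h2 ⟨u, (nb_mem G x).2 hu, he⟩⟩
  have hinj : Set.InjOn (fun u => φ s(v,u)) (NB G x r v) := by
    intro a ha b hb hab
    by_contra hne
    exact hpc.2 ((nb_mem G x).1 ha) ((nb_mem G x).1 hb) hne hab
  rw [hms, Finset.card_sdiff_of_subset himg, Finset.card_image_of_injOn hinj, Finset.card_range]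
  have := Finset.card_le_card himg
  rw [Finset.card_image_of_injOn hinj, Finset.card_range] at this
  omega


lemma sym2_ne {w u a z : V} (h1 : w ≠ a) (h2 : w ≠ z) : s(w,u) ≠ s(a,z) := by
  intro h
  rcases sym2_eq_iff.1 h with ⟨h3, _⟩ | ⟨h3, _⟩
  · exact h1 h3
  · exact h2 h3

lemma sym2_ne' {r u a : V} (h1 : r ≠ a) (h2 : u ≠ a) : s(r,u) ≠ s(a,r) := by
  intro h
  rcases sym2_eq_iff.1 h with ⟨h3, _⟩ | ⟨_, h4⟩
  · exact h1 h3
  · exact h2 h4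

lemma sym2_congr {a b c : V} : s(a,b) = s(a,c) ↔ b = c := by
  rw [sym2_eq_iff]
  constructor
  · rintro (⟨_, h⟩ | ⟨h1, h2⟩)
    · exact h
    · exact h2.trans h1
  · rintro rfl; left; exact ⟨rfl, rfl⟩

section StepSec

variable {G : SimpleGraph V} [DecidableRel G.Adj] {x : V} {φ : Sym2 V → ℕ} {r z : V} {c : ℕ}

/-- hypotheses of a fan step -/
structure StepH (G : SimpleGraph V) [DecidableRel G.Adj] (x : V) (φ : Sym2 V → ℕ)
    (r z : V) (c : ℕ) : Prop where
  good : Good G x φ r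
  hz : (Del G x r).Adj x z
  hc : Miss G x φ r r c
  hcz : φ s(x,z) = c

namespace StepH

variable (H : StepH G x φ r z c)

noncomputable def φ₂ (_H : StepH G x φ r z c) : Sym2 V → ℕ := Function.update φ s(x,r) c

include H

lemma rne : r ≠ x := fun h => (G.irrefl (h ▸ H.good.1))
lemma zne : z ≠ x := fun h => (G.irrefl (h ▸ ((del_adj G x).1 H.hz).1))
lemma zr : z ≠ r := by
  have := ((del_adj G x).1 H.hz).2
  intro h; exact this (by rw [h])
lemma adjxz : G.Adj x z := ((del_adj G x).1 H.hz).1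
lemma adjxr : G.Adj x r := H.good.1

lemma upd_eq : H.φ₂ s(x,r) = c := by simp [φ₂]
lemma upd_ne {e : Sym2 V} (he : e ≠ s(x,r)) : H.φ₂ e = φ e := Function.update_of_ne he _ _

/-- updated coloring is proper on `G - xz` -/
lemma good₂ : Good G x H.φ₂ z := by
  obtain ⟨hadj, h1, h2⟩ := H.good
  refine ⟨H.adjxz, ?_, ?_⟩
  · intro a b hab
    rw [del_adj] at hab
    by_cases h : s(a,b) = s(x,r)
    · rw [h, H.upd_eq]; exact H.hc.1
    · rw [H.upd_ne h]
      exact h1 ((del_adj G x).2 ⟨hab.1, h⟩)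
  · intro a b d hab had hbd
    rw [del_adj] at hab had
    by_cases h : s(a,b) = s(x,r) <;> by_cases h' : s(a,d) = s(x,r)
    · exact absurd (h.trans h'.symm) (fun hh => hbd (sym2_congr.1 hh))
    · rw [h, H.upd_eq, H.upd_ne h']
      rcases sym2_eq_iff.1 h with ⟨hax, hbr⟩ | ⟨har, hbx⟩
      · -- a = x, b = r : other edge is s(x,d), d ≠ r, d ≠ z; compare with s(x,z)
        obtain ⟨rfl, rfl⟩ : x = a ∧ r = b := ⟨hax.symm, hbr.symm⟩
        rw [← H.hcz]
        have hdz : d ≠ z := by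
          intro hh; exact had.2 (by rw [hh])
        intro hh
        exact h2 ((del_adj G x).2 ⟨H.adjxz, sym2_congr.not.2 H.zr⟩)
          ((del_adj G x).2 ⟨had.1, h'⟩) (Ne.symm hdz) hh
      · -- a = r, b = x : other edge s(r,d), d ≠ x
        obtain ⟨rfl, rfl⟩ : r = a ∧ x = b := ⟨har.symm, hbx.symm⟩
        have hdx : d ≠ x := Ne.symm hbd
        exact fun hh => (H.hc.2 d ((del_adj G x).2 ⟨had.1, sym2_ne' H.rne hdx⟩)) hh.symm
    · rw [h', H.upd_eq, H.upd_ne h]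
      rcases sym2_eq_iff.1 h' with ⟨hax, hdr⟩ | ⟨har, hdx⟩
      · obtain ⟨rfl, rfl⟩ : x = a ∧ r = d := ⟨hax.symm, hdr.symm⟩
        rw [← H.hcz]
        have hbz : b ≠ z := by
          intro hh; exact hab.2 (by rw [hh])
        exact h2 ((del_adj G x).2 ⟨hab.1, h⟩)
          ((del_adj G x).2 ⟨H.adjxz, sym2_congr.not.2 H.zr⟩) hbz
      · obtain ⟨rfl, rfl⟩ : r = a ∧ x = d := ⟨har.symm, hdx.symm⟩
        exact H.hc.2 b ((del_adj G x).2 ⟨hab.1, sym2_ne' H.rne hbd⟩)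
    · rw [H.upd_ne h, H.upd_ne h']
      exact h2 ((del_adj G x).2 ⟨hab.1, h⟩) ((del_adj G x).2 ⟨had.1, h'⟩) hbd

lemma miss_x {c' : ℕ} : Miss G x H.φ₂ z x c' ↔ Miss G x φ r x c' := by
  constructor
  · rintro ⟨hlt, hall⟩
    refine ⟨hlt, fun u hu => ?_⟩
    rw [del_adj] at hu
    have hur : u ≠ r := fun hh => hu.2 (by rw [hh])
    by_cases huz : u = z
    · obtain rfl : z = u := huz.symm
      rw [H.hcz]
      have := hall r ((del_adj G x).2 ⟨H.adjxr, sym2_congr.not.2 H.zr.symm⟩)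
      rwa [H.upd_eq] at this
    · have := hall u ((del_adj G x).2 ⟨hu.1, sym2_congr.not.2 huz⟩)
      rwa [H.upd_ne (sym2_congr.not.2 hur)] at this
  · rintro ⟨hlt, hall⟩
    refine ⟨hlt, fun u hu => ?_⟩
    rw [del_adj] at hu
    have huz : u ≠ z := fun hh => hu.2 (by rw [hh])
    by_cases hur : u = r
    · obtain rfl : r = u := hur.symm
      rw [H.upd_eq, ← H.hcz]
      exact hall z ((del_adj G x).2 ⟨H.adjxz, sym2_congr.not.2 H.zr⟩)
    · rw [H.upd_ne (sym2_congr.not.2 hur)]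
      exact hall u ((del_adj G x).2 ⟨hu.1, sym2_congr.not.2 hur⟩)

lemma del_adj_z_at_z {u : V} : (Del G x z).Adj z u ↔ G.Adj z u ∧ u ≠ x := by
  rw [del_adj]
  constructor
  · rintro ⟨h1, h2⟩
    refine ⟨h1, fun hh => h2 ?_⟩
    subst hh; exact Sym2.eq_swap
  · rintro ⟨h1, h2⟩
    refine ⟨h1, ?_⟩
    intro hh
    rcases sym2_eq_iff.1 hh with ⟨hzx, _⟩ | ⟨_, hux⟩
    · exact H.zne hzx
    · exact h2 hux

lemma del_adj_r_at_r {u : V} : (Del G x r).Adj r u ↔ G.Adj r u ∧ u ≠ x := by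
  rw [del_adj]
  constructor
  · rintro ⟨h1, h2⟩
    refine ⟨h1, fun hh => h2 ?_⟩
    subst hh; exact Sym2.eq_swap
  · rintro ⟨h1, h2⟩
    refine ⟨h1, ?_⟩
    intro hh
    rcases sym2_eq_iff.1 hh with ⟨hzx, _⟩ | ⟨_, hux⟩
    · exact H.rne hzx
    · exact h2 hux

lemma miss_z {c' : ℕ} : Miss G x H.φ₂ z z c' ↔ (Miss G x φ r z c' ∨ c' = c) := by
  have hphi : ∀ u : V, H.φ₂ s(z,u) = φ s(z,u) := by
    intro u
    exact H.upd_ne (sym2_ne H.zne H.zr)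
  constructor
  · rintro ⟨hlt, hall⟩
    by_cases hcc : c' = c
    · right; exact hcc
    · left
      refine ⟨hlt, fun u hu => ?_⟩
      rw [del_adj] at hu
      by_cases hux : u = x
      · obtain rfl : x = u := hux.symm
        rw [Sym2.eq_swap, H.hcz]
        exact fun hh => hcc hh.symm
      · have := hall u ((H.del_adj_z_at_z).2 ⟨hu.1, hux⟩)
        rwa [hphi u] at this
  · intro hcase
    rcases hcase with ⟨hlt, hall⟩ | rfl
    · refine ⟨hlt, fun u hu => ?_⟩
      rw [H.del_adj_z_at_z] at hu
      rw [hphi u]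
      exact hall u ((del_adj G x).2 ⟨hu.1, sym2_ne H.zne H.zr⟩)
    · refine ⟨H.hc.1, fun u hu => ?_⟩
      rw [H.del_adj_z_at_z] at hu
      rw [hphi u, ← H.hcz]
      have := H.good.2.2 ((del_adj G x).2 ⟨hu.1.symm.symm, sym2_ne H.zne H.zr⟩)
        ((del_adj G x).2 ⟨H.adjxz.symm, sym2_ne H.zne H.zr⟩) hu.2
      rw [show s(z,x) = s(x,z) from Sym2.eq_swap] at this
      exact this

lemma miss_r {c' : ℕ} : Miss G x H.φ₂ z r c' ↔ (Miss G x φ r r c' ∧ c' ≠ c) := by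
  have hadjall : ∀ u : V, (Del G x z).Adj r u ↔ G.Adj r u := by
    intro u
    rw [del_adj]
    constructor
    · exact fun h => h.1
    · intro h
      exact ⟨h, sym2_ne H.rne H.zr.symm⟩
  constructor
  · rintro ⟨hlt, hall⟩
    have hcc : c ≠ c' := by
      have := hall x ((hadjall x).2 H.adjxr.symm)
      rwa [show s(r,x) = s(x,r) from Sym2.eq_swap, H.upd_eq] at this
    refine ⟨⟨hlt, fun u hu => ?_⟩, Ne.symm hcc⟩
    rw [H.del_adj_r_at_r] at hu
    have := hall u ((hadjall u).2 hu.1)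
    rwa [H.upd_ne (sym2_ne' H.rne hu.2)] at this
  · rintro ⟨⟨hlt, hall⟩, hcc⟩
    refine ⟨hlt, fun u hu => ?_⟩
    rw [hadjall u] at hu
    by_cases hux : u = x
    · obtain rfl : x = u := hux.symm
      rw [show s(r,x) = s(x,r) from Sym2.eq_swap, H.upd_eq]
      exact fun h => hcc h.symm
    · rw [H.upd_ne (sym2_ne' H.rne hux)]
      exact hall u ((H.del_adj_r_at_r).2 ⟨hu, hux⟩)

lemma miss_other {w : V} (hwx : w ≠ x) (hwr : w ≠ r) (hwz : w ≠ z) {c' : ℕ} :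
    Miss G x H.φ₂ z w c' ↔ Miss G x φ r w c' := by
  have hadj : ∀ u : V, (Del G x z).Adj w u ↔ (Del G x r).Adj w u := by
    intro u
    rw [del_adj, del_adj]
    constructor
    · rintro ⟨h1, _⟩; exact ⟨h1, sym2_ne hwx hwr⟩
    · rintro ⟨h1, _⟩; exact ⟨h1, sym2_ne hwx hwz⟩
  have hphi : ∀ u : V, H.φ₂ s(w,u) = φ s(w,u) := fun u => H.upd_ne (sym2_ne hwx hwr)
  constructor
  · rintro ⟨hlt, hall⟩
    refine ⟨hlt, fun u hu => ?_⟩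
    have := hall u ((hadj u).2 hu)
    rwa [hphi u] at this
  · rintro ⟨hlt, hall⟩
    refine ⟨hlt, fun u hu => ?_⟩
    rw [hphi u]
    exact hall u ((hadj u).1 hu)

end StepH
end StepSec


section FanSec
variable {G : SimpleGraph V} [DecidableRel G.Adj] {x : V}

/-- a fan step: `b` is a neighbour of `x` (in `G - xr`) whose edge color is missing at `a` -/
def FanStep (G : SimpleGraph V) [DecidableRel G.Adj] (x : V) (φ : Sym2 V → ℕ) (r a b : V) : Prop :=
  (Del G x r).Adj x b ∧ Miss G x φ r a (φ s(x, b))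

/-- vertices reachable from the root `r` by fan steps -/
inductive Reach (G : SimpleGraph V) [DecidableRel G.Adj] (x : V) (φ : Sym2 V → ℕ) (r : V) : V → Prop
  | base : Reach G x φ r r
  | step {a b : V} : Reach G x φ r a → FanStep G x φ r a b → Reach G x φ r b

lemma reach_ne_x {φ : Sym2 V → ℕ} {r v : V} (hg : G.Adj x r) (h : Reach G x φ r v) : v ≠ x := by
  induction h with
  | base => exact fun hh => G.irrefl (hh ▸ hg)
  | step _ hf _ => exact fun hh => (Del G x _).irrefl (hh ▸ hf.1)

namespace StepH

variable {φ : Sym2 V → ℕ} {r z : V} {c : ℕ} (H : StepH G x φ r z c)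

include H

lemma reach_root : Reach G x H.φ₂ z r := by
  refine Reach.step Reach.base ⟨(del_adj G x).2 ⟨H.adjxr, sym2_congr.not.2 H.zr.symm⟩, ?_⟩
  rw [H.upd_eq]
  exact H.miss_z.2 (Or.inr rfl)

lemma reach_transfer {v : V} (h : Reach G x φ r v) : Reach G x H.φ₂ z v := by
  induction h with
  | base => exact H.reach_root
  | @step a b ha hf ih =>
    by_cases hbz : b = z
    · obtain rfl : z = b := hbz.symm
      exact Reach.base
    · by_cases hbr : b = r
      · obtain rfl : r = b := hbr.symm
        exact H.reach_root
      · have hax : a ≠ x := reach_ne_x H.good.1 ha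
        have hGxb : G.Adj x b := del_le G x hf.1
        have hedge : H.φ₂ s(x,b) = φ s(x,b) := H.upd_ne (sym2_congr.not.2 hbr)
        refine Reach.step ih ⟨(del_adj G x).2 ⟨hGxb, sym2_congr.not.2 hbz⟩, ?_⟩
        rw [hedge]
        by_cases har : a = r
        · obtain rfl : r = a := har.symm
          refine H.miss_r.2 ⟨hf.2, ?_⟩
          rw [← H.hcz]
          exact H.good.2.2 ((del_adj G x).2 ⟨hGxb, sym2_congr.not.2 hbr⟩) H.hz hbz
        · by_cases haz : a = z
          · obtain rfl : z = a := haz.symm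
            exact H.miss_z.2 (Or.inl hf.2)
          · exact (H.miss_other hax har haz).2 hf.2

lemma slide {u : V} {γ : ℕ} (hu : Reach G x φ r u) (hmu : Miss G x φ r u γ) :
    ∃ u', Reach G x H.φ₂ z u' ∧ Miss G x H.φ₂ z u' γ ∧ (u' = u ∨ (u = r ∧ u' = z ∧ γ = c)) := by
  by_cases hur : u = r
  · by_cases hγc : γ = c
    · exact ⟨z, Reach.base, by rw [hγc]; exact H.miss_z.2 (Or.inr rfl), Or.inr ⟨hur, rfl, hγc⟩⟩
    · refine ⟨u, H.reach_transfer hu, ?_, Or.inl rfl⟩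
      obtain rfl : r = u := hur.symm
      exact H.miss_r.2 ⟨hmu, hγc⟩
  · refine ⟨u, H.reach_transfer hu, ?_, Or.inl rfl⟩
    by_cases huz : u = z
    · obtain rfl : z = u := huz.symm
      exact H.miss_z.2 (Or.inl hmu)
    · exact (H.miss_other (reach_ne_x H.good.1 hu) hur huz).2 hmu

end StepH

/-- chains -/

lemma chain_concat {R : V → V → Prop} : ∀ {A : List V} {a b : V},
    List.Chain R a A → R (A.getLastD a) b → List.Chain R a (A ++ [b]) := by
  intro A
  induction A with
  | nil =>
    intro a b _ h2
    exact List.Chain.cons h2 List.Chain.nil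
  | cons hd tl ih =>
    intro a b h1 h2
    rcases h1 with _ | _ | ⟨hr, hc⟩
    rw [List.getLastD_cons] at h2
    exact List.Chain.cons hr (ih hc h2)

lemma chain_unconcat {R : V → V → Prop} : ∀ {A : List V} {a b : V},
    List.Chain R a (A ++ [b]) → List.Chain R a A ∧ R (A.getLastD a) b := by
  intro A
  induction A with
  | nil =>
    intro a b h
    rcases h with _ | _ | ⟨hr, _⟩
    exact ⟨List.Chain.nil, hr⟩
  | cons hd tl ih =>
    intro a b h
    rcases h with _ | _ | ⟨hr, hc⟩
    obtain ⟨h1, h2⟩ := ih hc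
    exact ⟨List.Chain.cons hr h1, by rw [List.getLastD_cons]; exact h2⟩

lemma chain_reach {φ : Sym2 V → ℕ} {r : V} : ∀ {A : List V},
    List.Chain (FanStep G x φ r) r A → Reach G x φ r (A.getLastD r) := by
  intro A
  induction A using List.reverseRecOn with
  | nil => exact fun _ => Reach.base
  | append_singleton A b ih =>
    intro h
    rw [List.getLastD_concat]
    obtain ⟨h1, h2⟩ := chain_unconcat h
    exact Reach.step (ih h1) h2

lemma reach_to_chain {φ : Sym2 V → ℕ} {r v : V} (h : Reach G x φ r v) :
    ∃ A : List V, List.Chain (FanStep G x φ r) r A ∧ A.getLastD r = v ∧ (r :: A).Nodup := by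
  induction h with
  | base => exact ⟨[], List.Chain.nil, rfl, List.nodup_singleton r⟩
  | @step a b ha hf ih =>
    obtain ⟨A, hc, hlast, hnd⟩ := ih
    by_cases hb : b ∈ r :: A
    · rcases List.mem_cons.1 hb with hbr | hbA
      · exact ⟨[], List.Chain.nil, hbr.symm, List.nodup_singleton r⟩
      · obtain ⟨A₁, A₂, rfl⟩ := List.append_of_mem hbA
        refine ⟨A₁ ++ [b], (List.isChain_cons_split.1 hc).1, List.getLastD_concat .., ?_⟩
        have hsub : (r :: (A₁ ++ [b])).Sublist (r :: (A₁ ++ b :: A₂)) :=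
          List.Sublist.cons₂ r (List.Sublist.append_left
            (List.singleton_sublist.2 (List.mem_cons_self (a := b) (l := A₂))) A₁)
        exact hnd.sublist hsub
    · refine ⟨A ++ [b], chain_concat hc (by rw [hlast]; exact hf), List.getLastD_concat .., ?_⟩
      have heq : (r :: A) ++ [b] = r :: (A ++ [b]) := by simp
      rw [← heq]
      exact List.Nodup.append hnd (List.nodup_singleton b)
        (by intro t ht1 ht2; rw [List.mem_singleton] at ht2; subst ht2; exact hb ht1)

end FanSec

def restrictG (Γ : SimpleGraph V) (a : V) : SimpleGraph V where
  Adj u w := Γ.Adj u w ∧ Γ.Reachable a u ∧ Γ.Reachable a w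
  symm := ⟨by rintro u w ⟨h1, h2, h3⟩; exact ⟨h1.symm, h3, h2⟩⟩
  loopless := ⟨fun u h => Γ.irrefl h.1⟩

lemma three_endpoints {Γ : SimpleGraph V} [DecidableRel Γ.Adj] {a b c : V}
    (hdeg : ∀ v, Γ.degree v ≤ 2)
    (ha : Γ.degree a ≤ 1) (hb : Γ.degree b ≤ 1) (hc : Γ.degree c ≤ 1)
    (hab : Γ.Reachable a b) (hac : Γ.Reachable a c)
    (h1 : a ≠ b) (h2 : a ≠ c) (h3 : b ≠ c) : False := by
  classical
  set Γ' := restrictG Γ a with hΓ'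
  letI : DecidableRel Γ'.Adj := fun u w => Classical.propDecidable _
  have hdeg' : ∀ u, Γ.Reachable a u → Γ'.degree u = Γ.degree u := by
    intro u hu
    unfold SimpleGraph.degree
    congr 1
    ext w
    simp only [mem_neighborFinset]
    constructor
    · intro h; exact h.1
    · intro h; exact ⟨h, hu, hu.trans h.reachable⟩
  have hdeg0 : ∀ u, ¬ Γ.Reachable a u → Γ'.degree u = 0 := by
    intro u hu
    rw [← Finset.card_empty]
    unfold SimpleGraph.degree
    congr 1
    ext w
    simp only [mem_neighborFinset, Finset.notMem_empty, iff_false]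
    rintro ⟨_, h, _⟩
    exact hu h
  set C : Finset V := univ.filter (fun v => Γ.Reachable a v) with hC
  have hmemC : ∀ v, v ∈ C ↔ Γ.Reachable a v := by
    intro v; simp [hC]
  have hsum2 : ∑ v, Γ'.degree v = ∑ v ∈ C, Γ.degree v := by
    have key := Finset.sum_filter_add_sum_filter_not univ (fun v => Γ.Reachable a v)
      (fun v => Γ'.degree v)
    have e1 : ∑ v ∈ C, Γ'.degree v = ∑ v ∈ C, Γ.degree v :=
      Finset.sum_congr rfl (fun v hv => hdeg' v ((hmemC v).1 hv))
    have e2 : ∑ v ∈ univ.filter (fun v => ¬ Γ.Reachable a v), Γ'.degree v = 0 := by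
      apply Finset.sum_eq_zero
      intro v hv
      exact hdeg0 v (by simpa using (Finset.mem_filter.1 hv).2)
    rw [← hC] at key
    omega
  have spec : ∀ u : V, ∃ w : V, u ∈ C.erase a →
      Γ.Adj w u ∧ Γ.Reachable a w ∧ Γ.dist a w < Γ.dist a u := by
    intro u
    by_cases hu : u ∈ C.erase a
    · have hru : Γ.Reachable a u := (hmemC u).1 (Finset.mem_of_mem_erase hu)
      have hua : u ≠ a := (Finset.ne_of_mem_erase hu)
      obtain ⟨p, hp⟩ := hru.exists_walk_length_eq_dist
      obtain ⟨w, h, p', hp'⟩ := SimpleGraph.Walk.exists_eq_cons_of_ne hua p.reverse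
      refine ⟨w, fun _ => ⟨h.symm, p'.reverse.reachable, ?_⟩⟩
      have hlen : p.reverse.length = p'.length + 1 := by rw [hp']; simp
      rw [SimpleGraph.Walk.length_reverse] at hlen
      have hle : Γ.dist a w ≤ p'.length := by
        have := SimpleGraph.dist_le p'.reverse
        rwa [SimpleGraph.Walk.length_reverse] at this
      omega
    · exact ⟨u, fun h => absurd h hu⟩
  choose f hf using spec
  have hinj : (C.erase a).card ≤ Γ'.edgeFinset.card := by
    apply Finset.card_le_card_of_injOn (fun u => s(f u, u))
    · intro u hu
      obtain ⟨hadj, hrw, _⟩ := hf u hu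
      rw [Finset.mem_coe, SimpleGraph.mem_edgeFinset, SimpleGraph.mem_edgeSet]
      exact ⟨hadj, hrw, (hmemC u).1 (Finset.mem_of_mem_erase hu)⟩
    · intro u hu u' hu' heq
      rcases Sym2.eq_iff.1 heq with ⟨_, h⟩ | ⟨hfu, hufu'⟩
      · exact h
      · exfalso
        have d1 := (hf u (Finset.mem_coe.1 hu)).2.2
        have d2 := (hf u' (Finset.mem_coe.1 hu')).2.2
        rw [hfu] at d1
        rw [← hufu'] at d2
        omega
  have habc : a ∈ C ∧ b ∈ C ∧ c ∈ C :=
    ⟨(hmemC a).2 (Reachable.refl a), (hmemC b).2 hab, (hmemC c).2 hac⟩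
  -- sum bound
  have hbound : ∑ v ∈ C, Γ.degree v + 3 ≤ 2 * C.card := by
    have hD : ({a, b, c} : Finset V) ⊆ C := by
      intro t ht
      simp only [Finset.mem_insert, Finset.mem_singleton] at ht
      rcases ht with rfl | rfl | rfl
      · exact habc.1
      · exact habc.2.1
      · exact habc.2.2
    have hDcard : ({a, b, c} : Finset V).card = 3 := by
      rw [Finset.card_insert_of_notMem (by simp [h1, h2]),
        Finset.card_insert_of_notMem (by simp [h3]), Finset.card_singleton]
    have hsplit : (∑ v ∈ C \ {a,b,c}, Γ.degree v) + ∑ v ∈ ({a,b,c} : Finset V), Γ.degree v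
        = ∑ v ∈ C, Γ.degree v := Finset.sum_sdiff hD (f := fun v => Γ.degree v)
    have hs1 : ∑ v ∈ C \ {a,b,c}, Γ.degree v ≤ 2 * (C \ {a,b,c}).card := by
      calc ∑ v ∈ C \ {a,b,c}, Γ.degree v ≤ ∑ _v ∈ C \ {a,b,c}, 2 :=
            Finset.sum_le_sum (fun v _ => hdeg v)
        _ = 2 * (C \ {a,b,c}).card := by rw [Finset.sum_const]; ring
    have hs2 : ∑ v ∈ ({a,b,c} : Finset V), Γ.degree v ≤ 3 := by
      rw [Finset.sum_insert (by simp [h1, h2]), Finset.sum_insert (by simp [h3]),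
        Finset.sum_singleton]
      omega
    have hcards : (C \ {a,b,c}).card + 3 = C.card := by
      rw [Finset.card_sdiff_of_subset hD, hDcard]
      have := Finset.card_le_card hD
      omega
    omega
  have hhand := Γ'.sum_degrees_eq_twice_card_edges
  have hCa : (C.erase a).card + 1 = C.card := by
    rw [Finset.card_erase_of_mem habc.1]
    have : 0 < C.card := Finset.card_pos.2 ⟨a, habc.1⟩
    omega
  have e3 : 2 * (C.erase a).card ≤ ∑ v ∈ C, Γ.degree v := by
    rw [← hsum2, hhand]
    omega
  omega

section Kempe

variable {G : SimpleGraph V} [DecidableRel G.Adj] {x : V}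

instance delDec {r : V} : DecidableRel (Del G x r).Adj := fun a b =>
  decidable_of_iff (G.Adj a b ∧ s(a,b) ≠ s(x,r)) (del_adj G x).symm

/-- the Kempe-chain graph: edges of `G - xr` coloured `β` or `γ` -/
def KG (G : SimpleGraph V) [DecidableRel G.Adj] (x : V) (φ : Sym2 V → ℕ) (r : V)
    (β γ : ℕ) : SimpleGraph V where
  Adj a b := (Del G x r).Adj a b ∧ (φ s(a,b) = β ∨ φ s(a,b) = γ)
  symm := ⟨by
    rintro a b ⟨h1, h2⟩
    refine ⟨h1.symm, ?_⟩
    rwa [show s(b,a) = s(a,b) from Sym2.eq_swap]⟩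
  loopless := ⟨fun a h => (Del G x r).irrefl h.1⟩

instance kgDec {φ : Sym2 V → ℕ} {r : V} {β γ : ℕ} :
    DecidableRel (KG G x φ r β γ).Adj := fun a b =>
  inferInstanceAs (Decidable (_ ∧ _))

lemma kg_degree_le_two {φ : Sym2 V → ℕ} {r : V} {β γ : ℕ}
    (hpc : PC (Del G x r) φ G.maxDegree) (v : V) : (KG G x φ r β γ).degree v ≤ 2 := by
  classical
  have h : (KG G x φ r β γ).degree v ≤ ({β, γ} : Finset ℕ).card := by
    rw [← SimpleGraph.card_neighborFinset_eq_degree]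
    apply Finset.card_le_card_of_injOn (fun u => φ s(v,u))
    · intro u hu
      rw [Finset.mem_coe, SimpleGraph.mem_neighborFinset] at hu
      rcases hu.2 with h | h <;> simp [h]
    · intro u hu w hw heq
      rw [Finset.mem_coe, SimpleGraph.mem_neighborFinset] at hu hw
      by_contra hne
      exact hpc.2 hu.1 hw.1 hne heq
  calc (KG G x φ r β γ).degree v ≤ ({β, γ} : Finset ℕ).card := h
    _ ≤ 2 := Finset.card_insert_le _ _ |>.trans (by simp)

lemma kg_degree_le_one {φ : Sym2 V → ℕ} {r : V} {β γ : ℕ}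
    (hpc : PC (Del G x r) φ G.maxDegree) {v : V} (hm : Miss G x φ r v β) :
    (KG G x φ r β γ).degree v ≤ 1 := by
  classical
  have h : (KG G x φ r β γ).degree v ≤ ({γ} : Finset ℕ).card := by
    rw [← SimpleGraph.card_neighborFinset_eq_degree]
    apply Finset.card_le_card_of_injOn (fun u => φ s(v,u))
    · intro u hu
      rw [Finset.mem_coe, SimpleGraph.mem_neighborFinset] at hu
      rcases hu.2 with h | h
      · exact absurd h (hm.2 u hu.1)
      · simp [h]
    · intro u hu w hw heq
      rw [Finset.mem_coe, SimpleGraph.mem_neighborFinset] at hu hw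
      by_contra hne
      exact hpc.2 hu.1 hw.1 hne heq
  simpa using h

/-- colour transposition -/
def T (β γ c : ℕ) : ℕ := if c = β then γ else if c = γ then β else c

lemma T_beta {β γ : ℕ} : T β γ β = γ := by simp [T]

lemma T_gamma {β γ : ℕ} (h : β ≠ γ) : T β γ γ = β := by
  simp [T, Ne.symm h]

lemma T_other {β γ c : ℕ} (h1 : c ≠ β) (h2 : c ≠ γ) : T β γ c = c := by
  simp [T, h1, h2]

lemma T_invol {β γ : ℕ} (h : β ≠ γ) (c : ℕ) : T β γ (T β γ c) = c := by
  unfold T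
  split_ifs with h1 h2 <;> simp_all [T]

lemma T_lt {β γ c k : ℕ} (hβ : β < k) (hγ : γ < k) (hc : c < k) : T β γ c < k := by
  unfold T; split_ifs <;> omega

open Classical in
/-- the coloring obtained by swapping `β` and `γ` on the Kempe component of `z₀` -/
noncomputable def SW (G : SimpleGraph V) [DecidableRel G.Adj] (x : V) (φ : Sym2 V → ℕ)
    (r : V) (β γ : ℕ) (z₀ : V) : Sym2 V → ℕ :=
  fun e => if (φ e = β ∨ φ e = γ) ∧ e ∈ (Del G x r).edgeSet ∧
      (∃ a ∈ e, (KG G x φ r β γ).Reachable z₀ a) then T β γ (φ e) else φ e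

variable {φ : Sym2 V → ℕ} {r : V} {β γ : ℕ} {z₀ : V}

lemma sw_out {a b : V} (ha : ¬ (KG G x φ r β γ).Reachable z₀ a)
    (hadj : (Del G x r).Adj a b) : SW G x φ r β γ z₀ s(a,b) = φ s(a,b) := by
  classical
  rw [SW, if_neg]
  rintro ⟨hcol, _, v, hv, hr⟩
  rcases Sym2.mem_iff.1 hv with rfl | rfl
  · exact ha hr
  · refine ha (hr.trans ?_)
    refine SimpleGraph.Adj.reachable ⟨hadj.symm, ?_⟩
    rwa [show s(v,a) = s(a,v) from Sym2.eq_swap]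

lemma sw_in {a b : V} (ha : (KG G x φ r β γ).Reachable z₀ a)
    (hadj : (Del G x r).Adj a b) : SW G x φ r β γ z₀ s(a,b) = T β γ (φ s(a,b)) := by
  classical
  by_cases hcol : φ s(a,b) = β ∨ φ s(a,b) = γ
  · rw [SW, if_pos]
    exact ⟨hcol, (Del G x r).mem_edgeSet.2 hadj, a, Sym2.mem_mk_left a b, ha⟩
  · push_neg at hcol
    rw [SW, if_neg, T_other hcol.1 hcol.2]
    rintro ⟨hc, _, _⟩
    exact hcol.elim (fun h1 h2 => hc.elim h1 h2)

lemma sw_pc (hpc : PC (Del G x r) φ G.maxDegree) (hβ : β < G.maxDegree)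
    (hγ : γ < G.maxDegree) (hβγ : β ≠ γ) :
    PC (Del G x r) (SW G x φ r β γ z₀) G.maxDegree := by
  constructor
  · intro a b hab
    by_cases ha : (KG G x φ r β γ).Reachable z₀ a
    · rw [sw_in ha hab]
      exact T_lt hβ hγ (hpc.1 hab)
    · rw [sw_out ha hab]
      exact hpc.1 hab
  · intro a b d hab had hbd
    by_cases ha : (KG G x φ r β γ).Reachable z₀ a
    · rw [sw_in ha hab, sw_in ha had]
      intro heq
      have := congrArg (T β γ) heq
      rw [T_invol hβγ, T_invol hβγ] at this
      exact hpc.2 hab had hbd this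
    · rw [sw_out ha hab, sw_out ha had]
      exact hpc.2 hab had hbd

lemma sw_good (hg : Good G x φ r) (hβ : β < G.maxDegree)
    (hγ : γ < G.maxDegree) (hβγ : β ≠ γ) : Good G x (SW G x φ r β γ z₀) r :=
  ⟨hg.1, sw_pc hg.2 hβ hγ hβγ⟩

lemma sw_miss_out {a : V} (ha : ¬ (KG G x φ r β γ).Reachable z₀ a) {c' : ℕ} :
    Miss G x (SW G x φ r β γ z₀) r a c' ↔ Miss G x φ r a c' := by
  constructor
  · rintro ⟨h1, h2⟩
    refine ⟨h1, fun u hu => ?_⟩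
    have := h2 u hu
    rwa [sw_out ha hu] at this
  · rintro ⟨h1, h2⟩
    refine ⟨h1, fun u hu => ?_⟩
    rw [sw_out ha hu]
    exact h2 u hu

lemma sw_miss_in {a : V} (ha : (KG G x φ r β γ).Reachable z₀ a)
    (hβ : β < G.maxDegree) (hγ : γ < G.maxDegree) (hβγ : β ≠ γ) {c' : ℕ} :
    Miss G x (SW G x φ r β γ z₀) r a c' ↔ (c' < G.maxDegree ∧ Miss G x φ r a (T β γ c')) := by
  constructor
  · rintro ⟨h1, h2⟩
    refine ⟨h1, T_lt hβ hγ h1, fun u hu => ?_⟩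
    have := h2 u hu
    rw [sw_in ha hu] at this
    intro heq
    exact this (by rw [heq, T_invol hβγ])
  · rintro ⟨h1, _, h2⟩
    refine ⟨h1, fun u hu => ?_⟩
    rw [sw_in ha hu]
    intro heq
    have := congrArg (T β γ) heq
    rw [T_invol hβγ] at this
    exact h2 u hu this

end Kempe

section Shift

variable {G : SimpleGraph V} [DecidableRel G.Adj] {x : V}

lemma good_miss_contra {φ : Sym2 V → ℕ} {r : V} {c : ℕ}
    (hno : ∀ ψ, ¬ PC G ψ G.maxDegree) (hg : Good G x φ r)
    (hx : Miss G x φ r x c) (hr : Miss G x φ r r c) : False :=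
  hno _ (color_edge G x hg hx hr)

lemma nb_x_card {φ : Sym2 V → ℕ} {r : V} (hg : Good G x φ r) :
    (NB G x r x).card + 1 ≤ G.maxDegree := by
  classical
  have hsub : NB G x r x ⊆ (G.neighborFinset x).erase r := by
    intro u hu
    rw [nb_mem, del_adj] at hu
    rw [Finset.mem_erase, SimpleGraph.mem_neighborFinset]
    exact ⟨fun hh => hu.2 (by rw [hh]), hu.1⟩
  have h1 := Finset.card_le_card hsub
  have h2 : ((G.neighborFinset x).erase r).card + 1 = (G.neighborFinset x).card := by
    have hrmem : r ∈ G.neighborFinset x := by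
      rw [SimpleGraph.mem_neighborFinset]; exact hg.1
    rw [Finset.card_erase_of_mem hrmem]
    have : 0 < (G.neighborFinset x).card := Finset.card_pos.2 ⟨r, hrmem⟩
    omega
  have h3 : (G.neighborFinset x).card ≤ G.maxDegree := by
    rw [SimpleGraph.card_neighborFinset_eq_degree]
    exact G.degree_le_maxDegree x
  omega

lemma miss_x_nonempty {φ : Sym2 V → ℕ} {r : V} (hg : Good G x φ r) :
    ∃ β, Miss G x φ r x β := by
  classical
  have hcrd := ms_card G x hg.2 x
  have := nb_x_card hg
  have hpos : 0 < (MS G x φ r x).card := by omega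
  obtain ⟨β, hβ⟩ := Finset.card_pos.1 hpos
  exact ⟨β, (ms_mem G x).1 hβ⟩

lemma getLastD_mem_cons : ∀ (A : List V) (r : V), A.getLastD r ∈ r :: A := by
  intro A
  induction A with
  | nil => intro r; simp
  | cons hd tl ih =>
    intro r
    rw [List.getLastD_cons]
    have := ih hd
    simp only [List.mem_cons] at this ⊢
    tauto

lemma chain_all_reach {φ : Sym2 V → ℕ} {r : V} :
    ∀ {A : List V} {r₀ : V}, List.Chain (FanStep G x φ r) r₀ A →
      Reach G x φ r r₀ → ∀ a ∈ A, Reach G x φ r a := by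
  intro A
  induction A with
  | nil => intro r₀ _ _ a ha; cases ha
  | cons hd tl ih =>
    intro r₀ hc h0 a ha
    rcases hc with _ | _ | ⟨hstep, hc'⟩
    have hhd : Reach G x φ r hd := Reach.step h0 hstep
    rcases List.mem_cons.1 ha with rfl | ha'
    · exact hhd
    · exact ih hc' hhd a ha'

lemma chain_all_adj {φ : Sym2 V → ℕ} {r : V} :
    ∀ {A : List V} {r₀ : V}, List.Chain (FanStep G x φ r) r₀ A →
      ∀ a ∈ A, (Del G x r).Adj x a := by
  intro A
  induction A with
  | nil => intro r₀ _ a ha; cases ha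
  | cons hd tl ih =>
    intro r₀ hc a ha
    rcases hc with _ | _ | ⟨hstep, hc'⟩
    rcases List.mem_cons.1 ha with rfl | ha'
    · exact hstep.1
    · exact ih hc' a ha'

lemma chain_transfer {R S : V → V → Prop} :
    ∀ {A : List V} {a : V}, List.Chain R a A →
      (∀ p q, p ∈ a :: A.dropLast → q ∈ A → R p q → S p q) → List.Chain S a A := by
  intro A
  induction A with
  | nil => intro a _ _; exact List.Chain.nil
  | cons hd tl ih =>
    intro a hc hps
    rcases hc with _ | _ | ⟨hstep, hc'⟩
    refine List.Chain.cons (hps a hd (by simp) (by simp) hstep) ?_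
    cases tl with
    | nil => exact List.Chain.nil
    | cons hd2 tl2 =>
      refine ih hc' ?_
      intro p q hp hq hR
      refine hps p q ?_ (by simp [hq]) hR
      simp only [List.dropLast_cons₂, List.mem_cons] at hp ⊢
      tauto

/-- transferring a chain across a fan step (the tail of a chain is a chain for the
shifted coloring rooted at the new root) -/
lemma chain_step_transfer {φ : Sym2 V → ℕ} {r z : V} {c : ℕ} (H : StepH G x φ r z c)
    {A' : List V} (hc : List.Chain (FanStep G x φ r) z A') (hnd : (r :: z :: A').Nodup) :
    List.Chain (FanStep G x H.φ₂ z) z A' := by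
  have hndA : ∀ b ∈ A', b ≠ r ∧ b ≠ z := by
    intro b hb
    simp only [List.nodup_cons, List.mem_cons] at hnd
    constructor
    · rintro rfl; exact hnd.1 (Or.inr hb)
    · rintro rfl; exact hnd.2.1 hb
  refine chain_transfer hc ?_
  intro p q hp hq hstep
  obtain ⟨hqr, hqz⟩ := hndA q hq
  have hGxq : G.Adj x q := del_le G x hstep.1
  refine ⟨(del_adj G x).2 ⟨hGxq, sym2_congr.not.2 hqz⟩, ?_⟩
  rw [H.upd_ne (sym2_congr.not.2 hqr)]
  -- p is z or an element of A'.dropLast ⊆ A'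
  rcases List.mem_cons.1 hp with rfl | hp'
  · exact H.miss_z.2 (Or.inl hstep.2)
  · have hpA : p ∈ A' := List.dropLast_subset _ hp'
    obtain ⟨hpr, hpz⟩ := hndA p hpA
    have hpx : p ≠ x := fun hh => (Del G x r).irrefl (hh ▸ chain_all_adj hc p hpA)
    exact (H.miss_other hpx hpr hpz).2 hstep.2

end Shift

section ShiftChain
variable {G : SimpleGraph V} [DecidableRel G.Adj] {x : V}

lemma shift_chain : ∀ {A : List V} {φ : Sym2 V → ℕ} {r : V},
    Good G x φ r → List.Chain (FanStep G x φ r) r A → (r :: A).Nodup →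
    ∃ ψ, Good G x ψ (A.getLastD r)
      ∧ (∀ c', Miss G x ψ (A.getLastD r) x c' ↔ Miss G x φ r x c')
      ∧ (∀ c', Miss G x φ r (A.getLastD r) c' → Miss G x ψ (A.getLastD r) (A.getLastD r) c')
      ∧ (∀ v, Reach G x φ r v → Reach G x ψ (A.getLastD r) v) := by
  intro A
  induction A with
  | nil =>
    intro φ r hg _ _
    exact ⟨φ, hg, fun _ => Iff.rfl, fun _ h => h, fun _ h => h⟩
  | cons z A' ih =>
    intro φ r hg hc hnd
    rcases hc with _ | _ | ⟨hstep, hc'⟩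
    have H : StepH G x φ r z (φ s(x,z)) := ⟨hg, hstep.1, hstep.2, rfl⟩
    have hnd' : (z :: A').Nodup := hnd.of_cons
    have hchain₂ : List.Chain (FanStep G x H.φ₂ z) z A' := chain_step_transfer H hc' hnd
    obtain ⟨ψ, hψg, hψx, hψgrow, hψreach⟩ := ih H.good₂ hchain₂ hnd'
    rw [List.getLastD_cons]
    refine ⟨ψ, hψg, ?_, ?_, ?_⟩
    · intro c'
      exact (hψx c').trans (H.miss_x)
    · intro c' hm
      refine hψgrow c' ?_
      set v := A'.getLastD z with hv
      have hvmem : v ∈ z :: A' := getLastD_mem_cons A' z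
      by_cases hvz : v = z
      · rw [hvz]
        rw [hvz] at hm
        exact H.miss_z.2 (Or.inl hm)
      · have hvA : v ∈ A' := by
          rcases List.mem_cons.1 hvmem with h | h
          · exact absurd h hvz
          · exact h
        have hvr : v ≠ r := by
          rintro rfl
          simp only [List.nodup_cons, List.mem_cons] at hnd
          exact hnd.1 (Or.inr hvA)
        have hvx : v ≠ x := fun hh => (Del G x r).irrefl (hh ▸ chain_all_adj hc' v hvA)
        exact (H.miss_other hvx hvr hvz).2 hm
    · intro v hv
      exact hψreach v (H.reach_transfer hv)

end ShiftChain

section SigmaRoot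
variable {G : SimpleGraph V} [DecidableRel G.Adj] {x : V}

lemma kg_degree_le_one' {φ : Sym2 V → ℕ} {r : V} {β γ : ℕ}
    (hpc : PC (Del G x r) φ G.maxDegree) {v : V} (hm : Miss G x φ r v γ) :
    (KG G x φ r β γ).degree v ≤ 1 := by
  classical
  have h : (KG G x φ r β γ).degree v ≤ ({β} : Finset ℕ).card := by
    rw [← SimpleGraph.card_neighborFinset_eq_degree]
    apply Finset.card_le_card_of_injOn (fun u => φ s(v,u))
    · intro u hu
      rw [Finset.mem_coe, SimpleGraph.mem_neighborFinset] at hu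
      rcases hu.2 with h | h
      · simp [h]
      · exact absurd h (hm.2 u hu.1)
    · intro u hu w hw heq
      rw [Finset.mem_coe, SimpleGraph.mem_neighborFinset] at hu hw
      by_contra hne
      exact hpc.2 hu.1 hw.1 hne heq
  simpa using h

lemma getLastD_mem_of_ne_nil : ∀ {A : List V} (r : V), A ≠ [] → A.getLastD r ∈ A := by
  intro A
  induction A with
  | nil => intro r h; exact absurd rfl h
  | cons hd tl ih =>
    intro r _
    rw [List.getLastD_cons]
    cases tl with
    | nil => simp
    | cons h2 t2 => exact List.mem_cons_of_mem hd (ih hd (by simp))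

lemma sigma_root (hno : ∀ ψ, ¬ PC G ψ G.maxDegree) :
    ∀ (n : ℕ) {φ : Sym2 V → ℕ} {r : V} {γ : ℕ} {A : List V}, A.length ≤ n →
      Good G x φ r → List.Chain (FanStep G x φ r) r A → (r :: A).Nodup → A ≠ [] →
      Miss G x φ r r γ → Miss G x φ r (A.getLastD r) γ → False := by
  intro n
  induction n with
  | zero =>
    intro φ r γ A hlen _ _ _ hne _ _
    cases A with
    | nil => exact hne rfl
    | cons a l => simp at hlen
  | succ n ih =>
    intro φ r γ A hlen hg hc hnd hne hγr hγv
    have hvA : A.getLastD r ∈ A := getLastD_mem_of_ne_nil r hne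
    have hvr : A.getLastD r ≠ r := by
      intro h
      simp only [List.nodup_cons] at hnd
      exact hnd.1 (h ▸ hvA)
    have hadjv : (Del G x r).Adj x (A.getLastD r) := chain_all_adj hc _ hvA
    have hvx : A.getLastD r ≠ x := fun hh => (Del G x r).irrefl (hh ▸ hadjv)
    set v := A.getLastD r with hvdef
    have hγx : ¬ Miss G x φ r x γ := fun h => good_miss_contra hno hg h hγr
    obtain ⟨β, hβx⟩ := miss_x_nonempty hg
    have hβγ : β ≠ γ := fun h => hγx (h ▸ hβx)
    have hβlt : β < G.maxDegree := hβx.1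
    have hγlt : γ < G.maxDegree := hγr.1
    by_cases hrx : (KG G x φ r β γ).Reachable r x
    case neg =>
      have hψg : Good G x (SW G x φ r β γ r) r := sw_good hg hβlt hγlt hβγ
      have hψr : Miss G x (SW G x φ r β γ r) r r β :=
        (sw_miss_in (Reachable.refl r) hβlt hγlt hβγ).2 ⟨hβlt, by rw [T_beta]; exact hγr⟩
      have hψx : Miss G x (SW G x φ r β γ r) r x β := (sw_miss_out hrx).2 hβx
      exact good_miss_contra hno hψg hψx hψr
    case pos =>
    by_cases hint : ∃ a ∈ A.dropLast, Miss G x φ r a γ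
    case pos =>
      obtain ⟨a, haD, hma⟩ := hint
      have haA : a ∈ A := List.dropLast_subset _ haD
      obtain ⟨A₁, A₂, hAeq⟩ := List.append_of_mem haA
      have hA₂ : A₂ ≠ [] := by
        rintro rfl
        rw [hAeq] at hnd haD
        rw [List.dropLast_concat] at haD
        have h1 : (A₁ ++ [a]).Nodup := hnd.of_cons
        rw [List.nodup_append] at h1
        exact h1.2.2 a haD a (List.mem_singleton_self a) rfl
      have hc₁ : List.Chain (FanStep G x φ r) r (A₁ ++ [a]) := by
        rw [hAeq] at hc
        exact (List.isChain_cons_split.1 hc).1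
      have hnd₁ : (r :: (A₁ ++ [a])).Nodup := by
        rw [hAeq] at hnd
        refine hnd.sublist (List.Sublist.cons₂ r (List.Sublist.append_left
          (List.singleton_sublist.2 (List.mem_cons_self (a := a) (l := A₂))) A₁))
      have hlen₁ : (A₁ ++ [a]).length ≤ n := by
        have := congrArg List.length hAeq
        simp only [List.length_append, List.length_cons] at this
        have h2 : 0 < A₂.length := List.length_pos_iff.2 hA₂
        simp only [List.length_append, List.length_singleton]
        omega
      exact ih hlen₁ hg hc₁ hnd₁ (by simp) hγr
        (by rw [List.getLastD_concat]; exact hma)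
    case neg =>
    push_neg at hint
    by_cases hrv : (KG G x φ r β γ).Reachable r v
    case pos =>
      refine three_endpoints (Γ := KG G x φ r β γ) (a := r) (b := x) (c := v)
        (kg_degree_le_two hg.2) (kg_degree_le_one' hg.2 hγr) (kg_degree_le_one hg.2 hβx)
        (kg_degree_le_one' hg.2 hγv) hrx hrv ?_ (Ne.symm hvr) (Ne.symm hvx)
      intro h
      exact G.irrefl (h ▸ hg.1)
    case neg =>
      have hvx' : ¬ (KG G x φ r β γ).Reachable v x := fun h => hrv (hrx.trans h.symm)
      have hvr' : ¬ (KG G x φ r β γ).Reachable v r := fun h => hrv h.symm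
      have hψg : Good G x (SW G x φ r β γ v) r := sw_good hg hβlt hγlt hβγ
      have hcψ : List.Chain (FanStep G x (SW G x φ r β γ v) r) r A := by
        refine chain_transfer hc ?_
        intro p q hp hq hstep
        have hq' : (Del G x r).Adj x q := hstep.1
        refine ⟨hq', ?_⟩
        rw [sw_out hvx' hq']
        by_cases hpc : (KG G x φ r β γ).Reachable v p
        · have hcolβ : φ s(x,q) ≠ β := hβx.2 q hq'
          have hcolγ : φ s(x,q) ≠ γ := by
            intro h
            rcases List.mem_cons.1 hp with rfl | hp'
            · exact hvr' hpc
            · exact hint p hp' (h ▸ hstep.2)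
          rw [sw_miss_in hpc hβlt hγlt hβγ]
          exact ⟨hg.2.1 hq', by rw [T_other hcolβ hcolγ]; exact hstep.2⟩
        · exact (sw_miss_out hpc).2 hstep.2
      have hψv : Miss G x (SW G x φ r β γ v) r v β :=
        (sw_miss_in (Reachable.refl v) hβlt hγlt hβγ).2 ⟨hβlt, by rw [T_beta]; exact hγv⟩
      have hψx : Miss G x (SW G x φ r β γ v) r x β := (sw_miss_out hvx').2 hβx
      obtain ⟨ψ₂, hg₂, hx₂, hgrow₂, _⟩ := shift_chain hψg hcψ hnd
      exact good_miss_contra hno hg₂ ((hx₂ β).2 hψx) (hgrow₂ β hψv)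

end SigmaRoot

section SigmaGen
variable {G : SimpleGraph V} [DecidableRel G.Adj] {x : V}

lemma sigma_at_root (hno : ∀ ψ, ¬ PC G ψ G.maxDegree) {φ : Sym2 V → ℕ} {r : V} {γ : ℕ} {v : V}
    (hg : Good G x φ r) (hv : Reach G x φ r v) (hvr : v ≠ r)
    (hmr : Miss G x φ r r γ) (hmv : Miss G x φ r v γ) : False := by
  obtain ⟨B, hcB, hlastB, hndB⟩ := reach_to_chain hv
  have hBne : B ≠ [] := by
    rintro rfl
    exact hvr hlastB.symm
  exact sigma_root hno B.length le_rfl hg hcB hndB hBne hmr (by rw [hlastB]; exact hmv)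

lemma sigma_general (hno : ∀ ψ, ¬ PC G ψ G.maxDegree) :
    ∀ (n : ℕ) {φ : Sym2 V → ℕ} {r : V} {γ : ℕ} {u v : V} {A : List V}, A.length ≤ n →
      Good G x φ r → List.Chain (FanStep G x φ r) r A → (r :: A).Nodup →
      A.getLastD r = u → Reach G x φ r v → u ≠ v →
      Miss G x φ r u γ → Miss G x φ r v γ → False := by
  intro n
  induction n with
  | zero =>
    intro φ r γ u v A hlen hg hc hnd hlast hv huv hmu hmv
    cases A with
    | nil =>
      obtain rfl : r = u := hlast
      exact sigma_at_root hno hg hv (Ne.symm huv) hmu hmv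
    | cons a l => simp at hlen
  | succ n ih =>
    intro φ r γ u v A hlen hg hc hnd hlast hv huv hmu hmv
    cases A with
    | nil =>
      obtain rfl : r = u := hlast
      exact sigma_at_root hno hg hv (Ne.symm huv) hmu hmv
    | cons z A' =>
      rcases hc with _ | _ | ⟨hstep, hc'⟩
      have H : StepH G x φ r z (φ s(x,z)) := ⟨hg, hstep.1, hstep.2, rfl⟩
      have hchain₂ : List.Chain (FanStep G x H.φ₂ z) z A' := chain_step_transfer H hc' hnd
      have hnd' : (z :: A').Nodup := hnd.of_cons
      rw [List.getLastD_cons] at hlast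
      have humem : u ∈ z :: A' := hlast ▸ getLastD_mem_cons A' z
      have hur : u ≠ r := by
        intro h
        simp only [List.nodup_cons] at hnd
        exact hnd.1 (h ▸ humem)
      -- u keeps missing γ
      have hmu₂ : Miss G x H.φ₂ z u γ := by
        by_cases huz : u = z
        · obtain rfl : z = u := huz.symm
          exact H.miss_z.2 (Or.inl hmu)
        · have huA : u ∈ A' := by
            rcases List.mem_cons.1 humem with h | h
            · exact absurd h huz
            · exact h
          have hux : u ≠ x := fun hh => (Del G x r).irrefl (hh ▸ chain_all_adj hc' u huA)
          exact (H.miss_other hux hur huz).2 hmu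
      obtain ⟨v', hv'r, hv'm, hcase⟩ := H.slide hv hmv
      have huv' : u ≠ v' := by
        rcases hcase with rfl | ⟨hvr0, hv'z, hγc⟩
        · exact huv
        · intro h
          have huz : u = z := h.trans hv'z
          have hadj : (Del G x r).Adj u x := by rw [huz]; exact H.hz.symm
          have hneq := hmu.2 x hadj
          rw [show s(u,x) = s(x,u) from Sym2.eq_swap, huz] at hneq
          exact hneq hγc.symm
      exact ih (by simpa using hlen) H.good₂ hchain₂ hnd' hlast hv'r huv' hmu₂ hv'm

lemma missA (hno : ∀ ψ, ¬ PC G ψ G.maxDegree) {φ : Sym2 V → ℕ} {y : V} {δ : ℕ} {w : V}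
    (hg : Good G x φ y) (hw : Reach G x φ y w)
    (hx : Miss G x φ y x δ) (hmw : Miss G x φ y w δ) : False := by
  obtain ⟨A, hc, hlast, hnd⟩ := reach_to_chain hw
  obtain ⟨ψ, hgψ, hxpres, hgrow, _⟩ := shift_chain hg hc hnd
  rw [hlast] at hgψ hxpres hgrow
  exact good_miss_contra hno hgψ ((hxpres δ).2 hx) (hgrow δ hmw)

end SigmaGen

section Wrap
variable {G : SimpleGraph V} [DecidableRel G.Adj] {x : V}

lemma elementary (hno : ∀ ψ, ¬ PC G ψ G.maxDegree) {φ : Sym2 V → ℕ} {y : V} {γ : ℕ} {u v : V}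
    (hg : Good G x φ y) (hu : Reach G x φ y u) (hv : Reach G x φ y v) (huv : u ≠ v)
    (hmu : Miss G x φ y u γ) (hmv : Miss G x φ y v γ) : False := by
  obtain ⟨A, hc, hlast, hnd⟩ := reach_to_chain hu
  exact sigma_general hno A.length le_rfl hg hc hnd hlast hv huv hmu hmv

lemma reach_cases {φ : Sym2 V → ℕ} {y v : V} (h : Reach G x φ y v) :
    v = y ∨ (Del G x y).Adj x v := by
  induction h with
  | base => exact Or.inl rfl
  | step _ hf _ => exact Or.inr hf.1

end Wrap
end VAL


/-- Vizing's Adjacency Lemma: if `e = xy` is a critical edge of a class 2 graph `G`, then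
`x` has at least `Δ - d(y) + 1` neighbors of degree `Δ` distinct from `y`. -/
theorem vizing_adjacency {V : Type*} [Fintype V] [DecidableEq V]
    (G : SimpleGraph V) [DecidableRel G.Adj] (x y : V) (he : G.Adj x y)
    (hclass2 : chromaticIndex G = G.maxDegree + 1)
    (hcrit : chromaticIndex (G.deleteEdges {s(x, y)}) < chromaticIndex G) :
    G.maxDegree - G.degree y + 1 ≤
      (((G.neighborFinset x).filter fun v => G.degree v = G.maxDegree ∧ v ≠ y)).card := by
  classical
  open VAL Finset SimpleGraph in
  have hxy : x ≠ y := G.ne_of_adj he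
  have hno : ∀ ψ, ¬ VAL.PC G ψ G.maxDegree := by
    intro ψ h
    have := VAL.chromaticIndex_le_of_pc h
    omega
  obtain ⟨φ₀, hpc0⟩ := VAL.exists_pc_chromaticIndex (G.deleteEdges {s(x, y)})
  have hle : chromaticIndex (G.deleteEdges {s(x, y)}) ≤ G.maxDegree := by omega
  have hpc : VAL.PC (VAL.Del G x y) φ₀ G.maxDegree := VAL.pc_mono hpc0 hle
  have hg : VAL.Good G x φ₀ y := ⟨he, hpc⟩
  set S : Finset V := Finset.univ.filter (fun v => VAL.Reach G x φ₀ y v) with hS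
  have hSmem : ∀ v, v ∈ S ↔ VAL.Reach G x φ₀ y v := by intro v; simp [hS]
  have hyS : y ∈ S := (hSmem y).2 VAL.Reach.base
  -- disjointness of the missing sets over the fan
  have hdisj : ∀ u ∈ S, ∀ v ∈ S, u ≠ v →
      Disjoint (VAL.MS G x φ₀ y u) (VAL.MS G x φ₀ y v) := by
    intro u hu v hv huv
    refine Finset.disjoint_left.2 ?_
    intro c hcu hcv
    exact VAL.elementary hno hg ((hSmem u).1 hu) ((hSmem v).1 hv) huv
      ((VAL.ms_mem G x).1 hcu) ((VAL.ms_mem G x).1 hcv)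
  set U : Finset ℕ := S.biUnion (fun v => VAL.MS G x φ₀ y v) with hU
  have hsum_eq : ∑ v ∈ S, (VAL.MS G x φ₀ y v).card = U.card :=
    (Finset.card_biUnion hdisj).symm
  -- the injection from missing colors into fan vertices other than y
  have spec : ∀ c : ℕ, ∃ z : V, c ∈ U → ((VAL.Del G x y).Adj x z ∧ φ₀ s(x,z) = c) := by
    intro c
    by_cases hc : c ∈ U
    · obtain ⟨v, hvS, hcv⟩ := Finset.mem_biUnion.1 hc
      have hmv : VAL.Miss G x φ₀ y v c := (VAL.ms_mem G x).1 hcv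
      have hnx : ¬ VAL.Miss G x φ₀ y x c :=
        fun h => VAL.missA hno hg ((hSmem v).1 hvS) h hmv
      rw [VAL.Miss] at hnx
      push_neg at hnx
      obtain ⟨u, hu1, hu2⟩ := hnx hmv.1
      exact ⟨u, fun _ => ⟨hu1, hu2⟩⟩
    · exact ⟨x, fun h => absurd h hc⟩
  choose gg hgg using spec
  have hcard1 : U.card ≤ (S.erase y).card := by
    apply Finset.card_le_card_of_injOn gg
    · intro c hc
      obtain ⟨hadj, hcol⟩ := hgg c hc
      obtain ⟨v, hvS, hcv⟩ := Finset.mem_biUnion.1 hc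
      have hreach : VAL.Reach G x φ₀ y (gg c) :=
        VAL.Reach.step ((hSmem v).1 hvS) ⟨hadj, by rw [hcol]; exact (VAL.ms_mem G x).1 hcv⟩
      refine Finset.mem_erase.2 ⟨?_, (hSmem _).2 hreach⟩
      intro hgy
      exact ((VAL.del_adj G x).1 hadj).2 (by rw [hgy])
    · intro c1 h1 c2 h2 heq
      have e1 := (hgg c1 (Finset.mem_coe.1 h1)).2
      have e2 := (hgg c2 (Finset.mem_coe.1 h2)).2
      rw [← e1, ← e2, heq]
  -- cardinalities of missing sets
  have hms : ∀ v, (VAL.MS G x φ₀ y v).card + (VAL.NB G x y v).card = G.maxDegree :=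
    fun v => VAL.ms_card G x hpc v
  have hNBy : (VAL.NB G x y y).card + 1 = G.degree y := by
    have hset : VAL.NB G x y y = (G.neighborFinset y).erase x := by
      ext u
      rw [VAL.nb_mem, VAL.del_adj, Finset.mem_erase, SimpleGraph.mem_neighborFinset]
      constructor
      · rintro ⟨h1, h2⟩
        refine ⟨fun hh => h2 ?_, h1⟩
        rw [hh]
        exact Sym2.eq_swap
      · rintro ⟨h1, h2⟩
        refine ⟨h2, fun hh => ?_⟩
        rcases VAL.sym2_eq_iff.1 hh with ⟨h3, _⟩ | ⟨_, h4⟩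
        · exact hxy h3.symm
        · exact h1 h4
    have hxmem : x ∈ G.neighborFinset y := by
      rw [SimpleGraph.mem_neighborFinset]; exact he.symm
    rw [hset, Finset.card_erase_of_mem hxmem, SimpleGraph.card_neighborFinset_eq_degree]
    have : 0 < G.degree y := by
      rw [← SimpleGraph.card_neighborFinset_eq_degree]
      exact Finset.card_pos.2 ⟨x, hxmem⟩
    omega
  have hNBv : ∀ v ∈ S.erase y, (VAL.NB G x y v).card = G.degree v := by
    intro v hv
    obtain ⟨hvy, hvS⟩ := Finset.mem_erase.1 hv
    have hvx : v ≠ x := VAL.reach_ne_x he ((hSmem v).1 hvS)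
    have hset : VAL.NB G x y v = G.neighborFinset v := by
      ext u
      rw [VAL.nb_mem, VAL.del_adj, SimpleGraph.mem_neighborFinset]
      constructor
      · exact fun h => h.1
      · exact fun h => ⟨h, VAL.sym2_ne hvx hvy⟩
    rw [hset, SimpleGraph.card_neighborFinset_eq_degree]
  -- split the sum
  have hsplit : ∑ v ∈ S.erase y, (VAL.MS G x φ₀ y v).card + (VAL.MS G x φ₀ y y).card
      = ∑ v ∈ S, (VAL.MS G x φ₀ y v).card := Finset.sum_erase_add S _ hyS
  have hmsy : (VAL.MS G x φ₀ y y).card + G.degree y = G.maxDegree + 1 := by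
    have h1 := hms y
    omega
  -- the Δ-degree fan vertices
  set T' : Finset V := (S.erase y).filter (fun v => G.degree v = G.maxDegree) with hT'
  have hT'sub : T' ⊆ (G.neighborFinset x).filter
      (fun v => G.degree v = G.maxDegree ∧ v ≠ y) := by
    intro v hv
    rw [hT', Finset.mem_filter] at hv
    obtain ⟨hvE, hdv⟩ := hv
    obtain ⟨hvy, hvS⟩ := Finset.mem_erase.1 hvE
    rcases VAL.reach_cases ((hSmem v).1 hvS) with h | h
    · exact absurd h hvy
    · rw [Finset.mem_filter, SimpleGraph.mem_neighborFinset]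
      exact ⟨VAL.del_le G x h, hdv, hvy⟩
  -- every fan vertex of non-maximum degree contributes a missing color
  have hlow : (S.erase y).card ≤ ∑ v ∈ S.erase y, (VAL.MS G x φ₀ y v).card + T'.card := by
    have hfilt := Finset.card_filter_add_card_filter_not
      (s := S.erase y) (p := fun v => G.degree v = G.maxDegree)
    have hone : ∀ v ∈ (S.erase y).filter (fun v => ¬ G.degree v = G.maxDegree),
        1 ≤ (VAL.MS G x φ₀ y v).card := by
      intro v hv
      rw [Finset.mem_filter] at hv
      have h1 := hms v
      have h2 := hNBv v hv.1
      have h3 := G.degree_le_maxDegree v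
      have h4 := hv.2
      omega
    have hsum1 : ((S.erase y).filter (fun v => ¬ G.degree v = G.maxDegree)).card
        ≤ ∑ v ∈ (S.erase y).filter (fun v => ¬ G.degree v = G.maxDegree),
          (VAL.MS G x φ₀ y v).card := by
      calc ((S.erase y).filter (fun v => ¬ G.degree v = G.maxDegree)).card
          = ∑ _v ∈ (S.erase y).filter (fun v => ¬ G.degree v = G.maxDegree), 1 := by
            rw [Finset.sum_const, smul_eq_mul, mul_one]
        _ ≤ _ := Finset.sum_le_sum hone
    have hsub : ∑ v ∈ (S.erase y).filter (fun v => ¬ G.degree v = G.maxDegree),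
        (VAL.MS G x φ₀ y v).card ≤ ∑ v ∈ S.erase y, (VAL.MS G x φ₀ y v).card :=
      Finset.sum_le_sum_of_subset (Finset.filter_subset _ _)
    rw [hT']
    omega
  have hTcard := Finset.card_le_card hT'sub
  have hdy : G.degree y ≤ G.maxDegree := G.degree_le_maxDegree y
  omega
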